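/- Let L, W♭, W♯, O, S, T be matrix blocks, with L, S, T ∈ Mat_d(ℂ) and suitable dimensions for the others, and let λ > 3B > 0 be constants such that m(L) ≥ λ and ‖W♭‖, ‖W♯‖, ‖O‖ ≤ B. Suppose S is invertible with m(S) ≥ μ > 0 and ‖T·S^{-1}‖ < 1. Define S̃ := L·S + W♭·T and T̃ := W♯·S + O·T. Then m(S̃) ≥ (λ - B)·μ and ‖T̃·S̃^{-1}‖ < 1 (in particular S̃ is invertible). -/

import Mathlib

noncomputable def mexp {𝕜 : Type*} [RCLike 𝕜] {m n : Type*} [Fintype m] [Fintype n] [DecidableEq n]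
    (P : Matrix m n 𝕜) : ℝ :=
  sInf {r : ℝ | ∃ x : EuclideanSpace 𝕜 n, ‖x‖ = 1 ∧ ‖Matrix.toEuclideanLin P x‖ = r}

noncomputable def opNorm {𝕜 : Type*} [RCLike 𝕜] {m n : Type*} [Fintype m] [Fintype n] [DecidableEq n]
    (P : Matrix m n 𝕜) : ℝ :=
  sSup {r : ℝ | ∃ x : EuclideanSpace 𝕜 n, ‖x‖ = 1 ∧ ‖Matrix.toEuclideanLin P x‖ = r}

noncomputable def sval {𝕜 : Type*} [RCLike 𝕜] {n : Type*} [Fintype n] [DecidableEq n]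
    (P : Matrix n n 𝕜) : n → ℝ :=
  fun i => Real.sqrt ((Matrix.isHermitian_conjTranspose_mul_self P).eigenvalues i)

section Aux

variable {𝕜 : Type*} [RCLike 𝕜] {m n : Type*} [Fintype m] [Fintype n] [DecidableEq n]

private lemma bddAux (P : Matrix m n 𝕜) :
    BddAbove {r : ℝ | ∃ x : EuclideanSpace 𝕜 n, ‖x‖ = 1 ∧ ‖Matrix.toEuclideanLin P x‖ = r} := by
  refine ⟨‖(Matrix.toEuclideanLin P).toContinuousLinearMap‖, ?_⟩
  rintro r ⟨x, hx, rfl⟩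
  have := ((Matrix.toEuclideanLin P).toContinuousLinearMap).le_opNorm x
  simpa [hx] using this

private lemma opNorm_ptwise {P : Matrix m n 𝕜} {B : ℝ} (hP : opNorm P ≤ B)
    (v : EuclideanSpace 𝕜 n) : ‖Matrix.toEuclideanLin P v‖ ≤ B * ‖v‖ := by
  rcases eq_or_ne v 0 with rfl | hv
  · simp
  · have hn : ‖v‖ ≠ 0 := norm_ne_zero_iff.2 hv
    set u : EuclideanSpace 𝕜 n := ((‖v‖⁻¹ : ℝ) : 𝕜) • v with hu
    have hu1 : ‖u‖ = 1 := by
      rw [hu, norm_smul]; simp [hn]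
    have hmem : ‖Matrix.toEuclideanLin P u‖ ∈
        {r : ℝ | ∃ x : EuclideanSpace 𝕜 n, ‖x‖ = 1 ∧ ‖Matrix.toEuclideanLin P x‖ = r} :=
      ⟨u, hu1, rfl⟩
    have h1 : ‖Matrix.toEuclideanLin P u‖ ≤ B := (le_csSup (bddAux P) hmem).trans hP
    have h2 : ‖Matrix.toEuclideanLin P u‖ = ‖v‖⁻¹ * ‖Matrix.toEuclideanLin P v‖ := by
      rw [hu, map_smul, norm_smul]; simp
    rw [h2] at h1
    calc ‖Matrix.toEuclideanLin P v‖ = ‖v‖ * (‖v‖⁻¹ * ‖Matrix.toEuclideanLin P v‖) := by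
          field_simp
      _ ≤ ‖v‖ * B := mul_le_mul_of_nonneg_left h1 (norm_nonneg v)
      _ = B * ‖v‖ := mul_comm _ _

private lemma mexp_ptwise {P : Matrix m n 𝕜} {c : ℝ} (hP : c ≤ mexp P)
    (v : EuclideanSpace 𝕜 n) : c * ‖v‖ ≤ ‖Matrix.toEuclideanLin P v‖ := by
  rcases eq_or_ne v 0 with rfl | hv
  · simp
  · have hn : ‖v‖ ≠ 0 := norm_ne_zero_iff.2 hv
    set u : EuclideanSpace 𝕜 n := ((‖v‖⁻¹ : ℝ) : 𝕜) • v with hu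
    have hu1 : ‖u‖ = 1 := by
      rw [hu, norm_smul]; simp [hn]
    have hmem : ‖Matrix.toEuclideanLin P u‖ ∈
        {r : ℝ | ∃ x : EuclideanSpace 𝕜 n, ‖x‖ = 1 ∧ ‖Matrix.toEuclideanLin P x‖ = r} :=
      ⟨u, hu1, rfl⟩
    have hbdd : BddBelow {r : ℝ | ∃ x : EuclideanSpace 𝕜 n, ‖x‖ = 1 ∧
        ‖Matrix.toEuclideanLin P x‖ = r} :=
      ⟨0, by rintro r ⟨x, hx, rfl⟩; positivity⟩
    have h1 : c ≤ ‖Matrix.toEuclideanLin P u‖ := hP.trans (csInf_le hbdd hmem)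
    have h2 : ‖Matrix.toEuclideanLin P u‖ = ‖v‖⁻¹ * ‖Matrix.toEuclideanLin P v‖ := by
      rw [hu, map_smul, norm_smul]; simp
    rw [h2] at h1
    calc c * ‖v‖ ≤ (‖v‖⁻¹ * ‖Matrix.toEuclideanLin P v‖) * ‖v‖ :=
          mul_le_mul_of_nonneg_right h1 (norm_nonneg v)
      _ = ‖Matrix.toEuclideanLin P v‖ := by field_simp

private lemma mexp_ge {P : Matrix m n 𝕜} {c : ℝ}
    (h : ∀ v : EuclideanSpace 𝕜 n, c * ‖v‖ ≤ ‖Matrix.toEuclideanLin P v‖)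
    (hne : ∃ x : EuclideanSpace 𝕜 n, ‖x‖ = 1) : c ≤ mexp P := by
  apply le_csInf
  · obtain ⟨x, hx⟩ := hne; exact ⟨_, x, hx, rfl⟩
  · rintro r ⟨x, hx, rfl⟩; simpa [hx] using h x

private lemma opNorm_le' {P : Matrix m n 𝕜} {C : ℝ} (hC : 0 ≤ C)
    (h : ∀ v : EuclideanSpace 𝕜 n, ‖Matrix.toEuclideanLin P v‖ ≤ C * ‖v‖) : opNorm P ≤ C := by
  apply Real.sSup_le _ hC
  rintro r ⟨x, hx, rfl⟩; simpa [hx] using h x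

omit [Fintype m] in
private lemma toEuclideanLin_mul' {p : Type*} [Fintype p] [DecidableEq p]
    (A : Matrix m n 𝕜) (B : Matrix n p 𝕜) (v : EuclideanSpace 𝕜 p) :
    Matrix.toEuclideanLin (A * B) v = Matrix.toEuclideanLin A (Matrix.toEuclideanLin B v) := by
  simp [Matrix.toEuclideanLin_apply, Matrix.mulVec_mulVec]

end Aux

/-- Inductive step of the growth lemma: if the upper-left block `L` is large
(`m(L) ≥ λ > 3B`), the other blocks are bounded by `B`, `S` is invertible with
`m(S) ≥ μ > 0` and `‖T S⁻¹‖ < 1`, then `S̃ = L S + W♭ T`, `T̃ = W♯ S + O T`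
satisfy `m(S̃) ≥ (λ - B) μ` and `‖T̃ S̃⁻¹‖ < 1`; in particular `S̃` is invertible. -/
theorem growth_lemma_inductive_step {d e : ℕ}
    (L S : Matrix (Fin d) (Fin d) ℂ) (Wb : Matrix (Fin d) (Fin e) ℂ)
    (Ws : Matrix (Fin e) (Fin d) ℂ) (O : Matrix (Fin e) (Fin e) ℂ)
    (T : Matrix (Fin e) (Fin d) ℂ)
    {lam B μ : ℝ} (hB : 0 < B) (hlam : 3 * B < lam)
    (hL : lam ≤ mexp L)
    (hWb : opNorm Wb ≤ B) (hWs : opNorm Ws ≤ B) (hO : opNorm O ≤ B)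
    (hSinv : IsUnit S) (hμ : 0 < μ) (hS : μ ≤ mexp S)
    (hT : opNorm (T * S⁻¹) < 1) :
    (lam - B) * μ ≤ mexp (L * S + Wb * T) ∧
      opNorm ((Ws * S + O * T) * (L * S + Wb * T)⁻¹) < 1 ∧
      IsUnit (L * S + Wb * T) := by
  have hlamB : 0 < lam - B := by linarith
  set St := L * S + Wb * T with hSt
  set Tt := Ws * S + O * T with hTt
  -- d > 0
  have hd : 0 < d := by
    rcases Nat.eq_zero_or_pos d with rfl | hd
    · exfalso
      have hempty : {r : ℝ | ∃ x : EuclideanSpace ℂ (Fin 0), ‖x‖ = 1 ∧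
          ‖Matrix.toEuclideanLin S x‖ = r} = ∅ := by
        ext r; simp only [Set.mem_setOf_eq, Set.mem_empty_iff_false, iff_false]
        rintro ⟨x, hx, -⟩
        have : x = 0 := Subsingleton.elim x 0
        rw [this] at hx; simp at hx
      have : mexp S = 0 := by rw [mexp, hempty, Real.sInf_empty]
      rw [this] at hS; linarith
    · exact hd
  have hne : ∃ x : EuclideanSpace ℂ (Fin d), ‖x‖ = 1 := by
    refine ⟨EuclideanSpace.single ⟨0, hd⟩ (1 : ℂ), ?_⟩
    simp [EuclideanSpace.norm_single]
  have hSdet : IsUnit S.det := (Matrix.isUnit_iff_isUnit_det S).1 hSinv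
  -- T v is controlled by S v
  have hTv : ∀ v : EuclideanSpace ℂ (Fin d),
      ‖Matrix.toEuclideanLin T v‖ ≤ ‖Matrix.toEuclideanLin S v‖ := by
    intro v
    have hTS : T * S⁻¹ * S = T := by
      rw [Matrix.mul_assoc, Matrix.nonsing_inv_mul S hSdet, Matrix.mul_one]
    have := opNorm_ptwise hT.le (Matrix.toEuclideanLin S v)
    rw [← toEuclideanLin_mul', hTS] at this
    linarith [this]
  -- key estimate: (lam - B) ‖S v‖ ≤ ‖St v‖
  have key : ∀ v : EuclideanSpace ℂ (Fin d),
      (lam - B) * ‖Matrix.toEuclideanLin S v‖ ≤ ‖Matrix.toEuclideanLin St v‖ := by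
    intro v
    have hadd : Matrix.toEuclideanLin St v
        = Matrix.toEuclideanLin L (Matrix.toEuclideanLin S v)
          + Matrix.toEuclideanLin Wb (Matrix.toEuclideanLin T v) := by
      rw [hSt, map_add, LinearMap.add_apply, toEuclideanLin_mul', toEuclideanLin_mul']
    have h1 : lam * ‖Matrix.toEuclideanLin S v‖
        ≤ ‖Matrix.toEuclideanLin L (Matrix.toEuclideanLin S v)‖ := mexp_ptwise hL _
    have h2 : ‖Matrix.toEuclideanLin Wb (Matrix.toEuclideanLin T v)‖
        ≤ B * ‖Matrix.toEuclideanLin T v‖ := opNorm_ptwise hWb _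
    have h3 := hTv v
    have h4 : ‖Matrix.toEuclideanLin L (Matrix.toEuclideanLin S v)‖
        - ‖Matrix.toEuclideanLin Wb (Matrix.toEuclideanLin T v)‖
        ≤ ‖Matrix.toEuclideanLin St v‖ := by
      rw [hadd]
      have h5 := norm_sub_le (Matrix.toEuclideanLin L (Matrix.toEuclideanLin S v)
        + Matrix.toEuclideanLin Wb (Matrix.toEuclideanLin T v))
        (Matrix.toEuclideanLin Wb (Matrix.toEuclideanLin T v))
      simp only [add_sub_cancel_right] at h5
      linarith
    have h6 : B * ‖Matrix.toEuclideanLin T v‖ ≤ B * ‖Matrix.toEuclideanLin S v‖ :=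
      mul_le_mul_of_nonneg_left h3 hB.le
    nlinarith [norm_nonneg (Matrix.toEuclideanLin S v)]
  -- mexp part
  have part1 : (lam - B) * μ ≤ mexp St := by
    apply mexp_ge _ hne
    intro v
    calc (lam - B) * μ * ‖v‖ = (lam - B) * (μ * ‖v‖) := by ring
      _ ≤ (lam - B) * ‖Matrix.toEuclideanLin S v‖ :=
          mul_le_mul_of_nonneg_left (mexp_ptwise hS v) hlamB.le
      _ ≤ ‖Matrix.toEuclideanLin St v‖ := key v
  -- invertibility
  have hStdet : IsUnit St := by
    rw [Matrix.isUnit_iff_isUnit_det, isUnit_iff_ne_zero]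
    intro hdet
    obtain ⟨v, hv0, hv⟩ := (Matrix.exists_mulVec_eq_zero_iff).2 hdet
    set x : EuclideanSpace ℂ (Fin d) := (WithLp.equiv 2 (Fin d → ℂ)).symm v with hx
    have hx0 : x ≠ 0 := by
      simp only [hx, ne_eq]
      intro h
      apply hv0
      have := congrArg (WithLp.equiv 2 (Fin d → ℂ)) h
      simpa using this
    have hxS : Matrix.toEuclideanLin St x = 0 := by
      rw [hx, WithLp.equiv_symm_apply, Matrix.toEuclideanLin_apply_piLp_toLp, hv]
      simp
    have h7 := key x
    have h8 := mexp_ptwise hS x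
    rw [hxS] at h7
    simp only [norm_zero] at h7
    have hxpos : 0 < ‖x‖ := norm_pos_iff.2 hx0
    have h10 : 0 < μ * ‖x‖ := mul_pos hμ hxpos
    have h11 : 0 < (lam - B) * ‖(Matrix.toEuclideanLin S) x‖ :=
      mul_pos hlamB (lt_of_lt_of_le h10 h8)
    linarith
  -- T-tilde bound
  have key2 : ∀ v : EuclideanSpace ℂ (Fin d),
      (lam - B) * ‖Matrix.toEuclideanLin Tt v‖ ≤ 2 * B * ‖Matrix.toEuclideanLin St v‖ := by
    intro v
    have hadd : Matrix.toEuclideanLin Tt v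
        = Matrix.toEuclideanLin Ws (Matrix.toEuclideanLin S v)
          + Matrix.toEuclideanLin O (Matrix.toEuclideanLin T v) := by
      rw [hTt, map_add, LinearMap.add_apply, toEuclideanLin_mul', toEuclideanLin_mul']
    have h1 : ‖Matrix.toEuclideanLin Tt v‖
        ≤ B * ‖Matrix.toEuclideanLin S v‖ + B * ‖Matrix.toEuclideanLin T v‖ := by
      rw [hadd]
      exact (norm_add_le _ _).trans (add_le_add (opNorm_ptwise hWs _) (opNorm_ptwise hO _))
    have h2 : ‖Matrix.toEuclideanLin Tt v‖ ≤ 2 * B * ‖Matrix.toEuclideanLin S v‖ := by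
      have := mul_le_mul_of_nonneg_left (hTv v) hB.le
      linarith
    have h3 := key v
    nlinarith [norm_nonneg (Matrix.toEuclideanLin Tt v),
      norm_nonneg (Matrix.toEuclideanLin S v)]
  -- opNorm part
  have part2 : opNorm (Tt * St⁻¹) < 1 := by
    have hC : (0:ℝ) ≤ 2 * B / (lam - B) := by positivity
    have hop : opNorm (Tt * St⁻¹) ≤ 2 * B / (lam - B) := by
      apply opNorm_le' hC
      intro v
      have hStSt : St * St⁻¹ = 1 :=
        Matrix.mul_nonsing_inv St ((Matrix.isUnit_iff_isUnit_det St).1 hStdet)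
      have heq : Matrix.toEuclideanLin St (Matrix.toEuclideanLin St⁻¹ v) = v := by
        rw [← toEuclideanLin_mul', hStSt]
        simp [Matrix.toEuclideanLin_apply, Matrix.one_mulVec]
      have h9 := key2 (Matrix.toEuclideanLin St⁻¹ v)
      rw [heq] at h9
      rw [toEuclideanLin_mul', div_mul_eq_mul_div, le_div_iff₀ hlamB]
      linarith
    have : 2 * B / (lam - B) < 1 := by
      rw [div_lt_one hlamB]; linarith
    linarith
  exact ⟨part1, part2, hStdet⟩
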